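/- arXiv:1411.0497 — 2 statements merged into one kernel-verified Lean document; each statement's English description precedes it below -/
import Mathlib

section
/- For all real numbers p ≥ 2 and t ∈ (0, π/2], one has sin t + p·cos t ≤ (p³ + 20/sin t)^{1/3}. -/
open Real

theorem sin_add_mul_cos_le_cuberoot (p t : ℝ) (hp : 2 ≤ p)
    (ht0 : 0 < t) (ht : t ≤ π / 2) :
    Real.sin t + p * Real.cos t ≤ (p ^ 3 + 20 / Real.sin t) ^ ((1 : ℝ) / 3) := by
  set s := Real.sin t with hs
  set c := Real.cos t with hc
  have hs0 : 0 < s := Real.sin_pos_of_pos_of_lt_pi ht0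
    (lt_of_le_of_lt ht (by linarith [Real.pi_pos]))
  have hc0 : 0 ≤ c := Real.cos_nonneg_of_mem_Icc ⟨by linarith [Real.pi_pos], ht⟩
  have hs1 : s ≤ 1 := Real.sin_le_one t
  have hpyth : s ^ 2 + c ^ 2 = 1 := Real.sin_sq_add_cos_sq t
  have hp0 : 0 < p := by linarith
  have hM0 : 0 ≤ s + p * c := by positivity
  have hc1 : c ≤ 1 - s ^ 2 / 2 := by nlinarith [sq_nonneg (s ^ 2), sq_nonneg (c - 1 + s^2/2)]
  have h20 : (0:ℝ) < 20 / s := by positivity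
  have key : (s + p * c) ^ 3 ≤ p ^ 3 + 20 / s := by
    rcases le_or_gt 2 (p * s) with h | h
    · have hM : s + p * c ≤ p := by nlinarith
      have h3 : (s + p * c) ^ 3 ≤ p ^ 3 := pow_le_pow_left₀ hM0 hM 3
      linarith
    · have hM : s + p * c ≤ p + s := by nlinarith
      have h3 : (s + p * c) ^ 3 ≤ (p + s) ^ 3 := pow_le_pow_left₀ hM0 hM 3
      have h1 : (p + s) ^ 3 ≤ p ^ 3 + 20 / s := by
        rw [← sub_le_iff_le_add', le_div_iff₀ hs0]
        have hps : 0 < p * s := mul_pos hp0 hs0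
        nlinarith [mul_pos (show (0:ℝ) < 2 - p * s by linarith) (show (0:ℝ) < 2 + p * s by linarith),
          mul_nonneg hps.le hs0.le, sq_nonneg s, mul_nonneg (mul_nonneg hps.le hs0.le) hs0.le]
      linarith
  have hbase : (0:ℝ) ≤ p ^ 3 + 20 / s := by positivity
  calc s + p * c = ((s + p * c) ^ 3) ^ ((1:ℝ)/3) := by
        rw [← Real.rpow_natCast (s + p * c) 3, ← Real.rpow_mul hM0]
        norm_num
    _ ≤ (p ^ 3 + 20 / s) ^ ((1:ℝ)/3) :=
        Real.rpow_le_rpow (by positivity) key (by norm_num)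
end

section
/- Let (S_r) be a sequence of nonnegative reals with S_{r} ≤ |sin t_r| + S_{r−1}|cos t_r| for each r, where t_r are reals with sin t_r > 0 and t_r ∈ (0, π/2]. If S_{r₀} ≥ 8 for some index r₀, then for all r > r₀, S_r³ ≤ S_{r₀}³ + Σ_{j=r₀+1}^{r} 20/sin t_j. -/
open Real Finset

lemma key_ineq (p s c : ℝ) (hs : 0 < s) (hs1 : s ≤ 1) (hc : 0 ≤ c)
    (hsc : s ^ 2 + c ^ 2 = 1) (hp : 0 ≤ p) :
    (s + p * c) ^ 3 ≤ p ^ 3 + 20 / s := by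
  have hc1 : c ≤ 1 := by nlinarith
  have hu : 0 ≤ p * s := mul_nonneg hp hs.le
  have h1 : 0 ≤ (p*s)^3 - 3*(p*s)^2 - 3*(p*s) + 11 := by
    nlinarith [sq_nonneg (p*s - 5/2), mul_nonneg hu (sq_nonneg (p*s - 5/2)),
      sq_nonneg (p*s - 2), mul_nonneg hu (sq_nonneg (p*s - 2))]
  have e1 : s^4 ≤ 1 := by nlinarith
  have e2 : 3*p*c*s^3 ≤ 3*(p*s) := by
    nlinarith [mul_nonneg hu (by nlinarith : (0:ℝ) ≤ 1 - c*s^2)]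
  have e3 : 3*p^2*c^2*s^2 ≤ 3*(p*s)^2 := by
    nlinarith [sq_nonneg (p*s*s)]
  have e4 : p^3*c^3*s ≤ p^3*s - (p*s)^3 := by
    nlinarith [mul_nonneg (mul_nonneg (pow_nonneg hp 3) hs.le)
      (mul_nonneg (sq_nonneg c) (sub_nonneg.mpr hc1)),
      mul_nonneg (pow_nonneg hp 3) hs.le]
  have h : s * (s + p * c) ^ 3 ≤ s * p ^ 3 + 20 := by nlinarith [e1, e2, e3, e4, h1]
  rw [show p^3 + 20/s = (s*p^3+20)/s by field_simp, le_div_iff₀ hs]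
  nlinarith [h]

theorem S_cube_bound (S t : ℕ → ℝ) (r₀ : ℕ)
    (hSnonneg : ∀ r, 0 ≤ S r)
    (ht : ∀ r, 0 < t r ∧ t r ≤ π / 2)
    (hsin : ∀ r, 0 < Real.sin (t r))
    (hstep : ∀ r, 1 ≤ r → S r ≤ |Real.sin (t r)| + S (r - 1) * |Real.cos (t r)|)
    (h8 : 8 ≤ S r₀)
    (h2 : ∀ r, r₀ ≤ r → 2 ≤ S r) :
    ∀ r, r₀ < r →
      S r ^ 3 ≤ S r₀ ^ 3 + ∑ j ∈ Finset.Icc (r₀ + 1) r, 20 / Real.sin (t j) := by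
  have step : ∀ r, r₀ < r → S r ^ 3 ≤ S (r - 1) ^ 3 + 20 / Real.sin (t r) := by
    intro r hr
    have h1 : 1 ≤ r := by omega
    have hcos : 0 ≤ Real.cos (t r) :=
      Real.cos_nonneg_of_mem_Icc ⟨by linarith [(ht r).1, Real.pi_pos], (ht r).2⟩
    have hS := hstep r h1
    rw [abs_of_pos (hsin r), abs_of_nonneg hcos] at hS
    have hSr1 : 0 ≤ S (r - 1) := hSnonneg _
    have hrhs : 0 ≤ Real.sin (t r) + S (r - 1) * Real.cos (t r) := add_nonneg (hsin r).le (mul_nonneg hSr1 hcos)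
    calc S r ^ 3 ≤ (Real.sin (t r) + S (r - 1) * Real.cos (t r)) ^ 3 :=
          pow_le_pow_left₀ (hSnonneg r) hS 3
      _ ≤ S (r - 1) ^ 3 + 20 / Real.sin (t r) :=
          key_ineq _ _ _ (hsin r) (Real.sin_le_one _) hcos
            (Real.sin_sq_add_cos_sq _) hSr1
  intro r hr
  induction r with
  | zero => omega
  | succ n ih =>
    rcases Nat.lt_or_ge r₀ n with h | h
    · have ihn := ih h
      have := step (n + 1) (by omega)
      rw [Finset.sum_Icc_succ_top (by omega : r₀ + 1 ≤ n + 1)]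
      simp only [Nat.add_sub_cancel] at this
      linarith
    · have hn : n = r₀ := by omega
      subst hn
      have := step (n + 1) (by omega)
      simp only [Nat.add_sub_cancel] at this
      rw [show Finset.Icc (n + 1) (n + 1) = {n + 1} by simp]
      simpa using this
end
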